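/- arXiv:cmp-lg/9603002 — 2 statements merged into one kernel-verified Lean document; each statement's English description precedes it below -/
import Mathlib

section
/- If G is a left-linear context-free grammar, then for every state s of M(G) reachable from the start state s0, any two dotted rules A→α·β and A'→α'·β' belonging to s satisfy α = α'; consequently, for each reachable state s the set Stacks(s) contains exactly one stack, so every state has a single collapsing-congruence class and unfolding by the collapsing congruence leaves M(G) unchanged. -/
/-!
Infrastructure for finite-state approximation of context-free grammars
(Pereira & Wright). We use Mathlib's `ContextFreeGrammar`.

A dotted rule `A → α · β` is represented as `(some A, α, β)`;
the auxiliary dotted rules `S' → · S` and `S' → S ·` are represented with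
first component `none`.  States of the LR(0) characteristic machine `M(G)`
are sets of dotted rules (the determinization by the subset construction);
the transition function `next` is total, with the empty set `∅` playing the
role of "undefined", so genuine transitions are those with nonempty target.
-/

namespace LRApprox

universe uN uT

/-- Context-free grammar as in the older Mathlib, with the type of nonterminals
in an arbitrary universe (Mathlib's `ContextFreeGrammar` now restricts it to `Type`). -/
structure ContextFreeGrammar.{u, v} (T : Type v) where
  NT : Type u
  initial : NT
  rules : Finset (ContextFreeRule T NT)

variable {T : Type uT}

/-- A dotted rule `A → α · β`; `none` as first component stands for the
auxiliary start symbol `S'`. -/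
abbrev DottedRule (g : ContextFreeGrammar.{uN} T) : Type _ :=
  Option g.NT × List (Symbol T g.NT) × List (Symbol T g.NT)

/-- A state of the characteristic machine `M(G)`: a set of dotted rules. -/
abbrev LRState (g : ContextFreeGrammar.{uN} T) : Type _ := Set (DottedRule g)

/-- Closure of a set of dotted rules: whenever `A → α · B β` is present and
`B → γ` is a rule, add `B → · γ`. -/
inductive Closure (g : ContextFreeGrammar.{uN} T) (R : Set (DottedRule g)) :
    DottedRule g → Prop
  | base {d : DottedRule g} : d ∈ R → Closure g R d
  | step {A : Option g.NT} {α β : List (Symbol T g.NT)} {B : g.NT}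
      (r : ContextFreeRule T g.NT) :
      Closure g R (A, α, Symbol.nonterminal B :: β) →
      r ∈ g.rules → r.input = B → Closure g R (some B, [], r.output)

/-- The transition function `δ` of `M(G)`: shift the dot over `X` and take the
closure.  The empty set plays the role of "undefined". -/
def next (g : ContextFreeGrammar.{uN} T) (s : LRState g) (X : Symbol T g.NT) : LRState g :=
  {d | Closure g {d' | ∃ A α β, (A, α, X :: β) ∈ s ∧ d' = (A, α ++ [X], β)} d}

/-- The start state `s₀` of `M(G)`: the closure of `{S' → · S}`. -/
def start (g : ContextFreeGrammar.{uN} T) : LRState g :=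
  {d | Closure g {(none, [], [Symbol.nonterminal g.initial])} d}

/-- The dotted rule `S' → S ·`. -/
def finalDR (g : ContextFreeGrammar.{uN} T) : DottedRule g :=
  (none, [Symbol.nonterminal g.initial], [])

/-- A state is final iff it contains `S' → S ·`. -/
def IsFinal (g : ContextFreeGrammar.{uN} T) (s : LRState g) : Prop := finalDR g ∈ s

/-- Iterated transition function, extended to strings of symbols. -/
def nextStar (g : ContextFreeGrammar.{uN} T) (s : LRState g)
    (α : List (Symbol T g.NT)) : LRState g :=
  α.foldl (next g) s

/-- A stack of the shift-reduce recognizer: a sequence of (state, symbol) pairs. -/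
abbrev Stack (g : ContextFreeGrammar.{uN} T) : Type _ :=
  List (LRState g × Symbol T g.NT)

/-- `Stacks g s σ` iff `σ = ⟨q₀,X₀⟩…⟨q_k,X_k⟩` with `q₀ = s₀`,
`q_i = δ(q_{i-1},X_{i-1})` and `s = δ(q_k,X_k)`; in addition `Stacks s₀`
contains the empty sequence. -/
inductive Stacks (g : ContextFreeGrammar.{uN} T) : LRState g → Stack g → Prop
  | nil : Stacks g (start g) []
  | snoc {q : LRState g} {σ : Stack g} {X : Symbol T g.NT} :
      Stacks g q σ → next g q X ≠ ∅ → Stacks g (next g q X) (σ ++ [(q, X)])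

/-- A configuration `⟨s, σ, w⟩` of the shift-reduce recognizer `R(G)`. -/
structure Cfg (g : ContextFreeGrammar.{uN} T) where
  state : LRState g
  stack : Stack g
  input : List T

/-- A shift move of `R(G)`. -/
inductive ShiftStep (g : ContextFreeGrammar.{uN} T) : Cfg g → Cfg g → Prop
  | shift {s : LRState g} {σ : Stack g} {x : T} {w : List T} :
      next g s (Symbol.terminal x) ≠ ∅ →
      ShiftStep g ⟨s, σ, x :: w⟩
        ⟨next g s (Symbol.terminal x), σ ++ [(s, Symbol.terminal x)], w⟩

/-- A reduce move of `R(G)`. -/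
inductive ReduceStep (g : ContextFreeGrammar.{uN} T) : Cfg g → Cfg g → Prop
  | empty {s : LRState g} {σ : Stack g} {w : List T} {A : g.NT} :
      (some A, ([] : List (Symbol T g.NT)), ([] : List (Symbol T g.NT))) ∈ s →
      next g s (Symbol.nonterminal A) ≠ ∅ →
      ReduceStep g ⟨s, σ, w⟩
        ⟨next g s (Symbol.nonterminal A), σ ++ [(s, Symbol.nonterminal A)], w⟩
  | pop {s : LRState g} {σ τ : Stack g} {w : List T} {A : g.NT}
      {s₁ : LRState g} {X₁ : Symbol T g.NT} :
      (some A, ((s₁, X₁) :: τ).map Prod.snd, ([] : List (Symbol T g.NT))) ∈ s →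
      next g s₁ (Symbol.nonterminal A) ≠ ∅ →
      ReduceStep g ⟨s, σ ++ (s₁, X₁) :: τ, w⟩
        ⟨next g s₁ (Symbol.nonterminal A), σ ++ [(s₁, Symbol.nonterminal A)], w⟩

/-- A move of the shift-reduce recognizer `R(G)`. -/
def Step (g : ContextFreeGrammar.{uN} T) (c c' : Cfg g) : Prop :=
  ShiftStep g c c' ∨ ReduceStep g c c'

/-- `R(G)` accepts `w`: some sequence of moves leads from the initial
configuration `⟨s₀, ε, w⟩` to a final configuration `⟨s, ⟨s₀,S⟩, ε⟩`, `s ∈ F`. -/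
def RAccepts (g : ContextFreeGrammar.{uN} T) (w : List T) : Prop :=
  ∃ s : LRState g, IsFinal g s ∧
    Relation.ReflTransGen (Step g) ⟨start g, [], w⟩
      ⟨s, [(start g, Symbol.nonterminal g.initial)], []⟩

/-- A stack congruence on `R(G)`: a family of equivalence relations on
`Stacks(s)`, compatible with pushing. -/
def IsStackCongruence (g : ContextFreeGrammar.{uN} T)
    (E : LRState g → Stack g → Stack g → Prop) : Prop :=
  (∀ s σ σ', E s σ σ' → Stacks g s σ ∧ Stacks g s σ') ∧
  (∀ s σ, Stacks g s σ → E s σ σ) ∧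
  (∀ s σ σ', E s σ σ' → E s σ' σ) ∧
  (∀ s σ₁ σ₂ σ₃, E s σ₁ σ₂ → E s σ₂ σ₃ → E s σ₁ σ₃) ∧
  (∀ s X σ σ', next g s X ≠ ∅ → E s σ σ' →
    E (next g s X) (σ ++ [(s, X)]) (σ' ++ [(s, X)]))

/-- A state of the unfolded recognizer `R_≡`: a state of `M(G)` together with
an equivalence class of stacks (represented as a set of stacks). -/
abbrev UState (g : ContextFreeGrammar.{uN} T) : Type _ := LRState g × Set (Stack g)

/-- Transition function `δ_≡` of the unfolded recognizer:
`δ_≡(⟨s,[σ]⟩, X) = ⟨δ(s,X), [σ⟨s,X⟩]⟩`. -/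
def uNext (g : ContextFreeGrammar.{uN} T) (E : LRState g → Stack g → Stack g → Prop)
    (p : UState g) (X : Symbol T g.NT) : UState g :=
  (next g p.1 X,
   {τ | Stacks g (next g p.1 X) τ ∧ ∃ σ ∈ p.2, E (next g p.1 X) τ (σ ++ [(p.1, X)])})

/-- Start state `⟨s₀, [ε]⟩` of the unfolded recognizer. -/
def uStart (g : ContextFreeGrammar.{uN} T)
    (E : LRState g → Stack g → Stack g → Prop) : UState g :=
  (start g, {τ | Stacks g (start g) τ ∧ E (start g) τ []})

/-- Genuine states of the unfolded recognizer: pairs `⟨s, [σ]_s⟩` with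
`σ ∈ Stacks(s)`. -/
def IsUState (g : ContextFreeGrammar.{uN} T)
    (E : LRState g → Stack g → Stack g → Prop) (p : UState g) : Prop :=
  ∃ σ, Stacks g p.1 σ ∧ p.2 = {τ | Stacks g p.1 τ ∧ E p.1 τ σ}

/-- Iterated `δ_≡`, extended to strings of symbols. -/
def uNextStar (g : ContextFreeGrammar.{uN} T)
    (E : LRState g → Stack g → Stack g → Prop)
    (p : UState g) (α : List (Symbol T g.NT)) : UState g :=
  α.foldl (uNext g E) p

/-- A configuration of the unfolded recognizer `R_≡`. -/
structure UCfg (g : ContextFreeGrammar.{uN} T) where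
  state : UState g
  stack : List (UState g × Symbol T g.NT)
  input : List T

/-- A shift move of the unfolded recognizer. -/
inductive UShiftStep (g : ContextFreeGrammar.{uN} T)
    (E : LRState g → Stack g → Stack g → Prop) : UCfg g → UCfg g → Prop
  | shift {p : UState g} {σ : List (UState g × Symbol T g.NT)} {x : T} {w : List T} :
      next g p.1 (Symbol.terminal x) ≠ ∅ →
      UShiftStep g E ⟨p, σ, x :: w⟩
        ⟨uNext g E p (Symbol.terminal x), σ ++ [(p, Symbol.terminal x)], w⟩

/-- A reduce move of the unfolded recognizer. -/
inductive UReduceStep (g : ContextFreeGrammar.{uN} T)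
    (E : LRState g → Stack g → Stack g → Prop) : UCfg g → UCfg g → Prop
  | empty {p : UState g} {σ : List (UState g × Symbol T g.NT)} {w : List T} {A : g.NT} :
      (some A, ([] : List (Symbol T g.NT)), ([] : List (Symbol T g.NT))) ∈ p.1 →
      next g p.1 (Symbol.nonterminal A) ≠ ∅ →
      UReduceStep g E ⟨p, σ, w⟩
        ⟨uNext g E p (Symbol.nonterminal A), σ ++ [(p, Symbol.nonterminal A)], w⟩
  | pop {p : UState g} {σ τ : List (UState g × Symbol T g.NT)} {w : List T} {A : g.NT}
      {p₁ : UState g} {X₁ : Symbol T g.NT} :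
      (some A, ((p₁, X₁) :: τ).map Prod.snd, ([] : List (Symbol T g.NT))) ∈ p.1 →
      next g p₁.1 (Symbol.nonterminal A) ≠ ∅ →
      UReduceStep g E ⟨p, σ ++ (p₁, X₁) :: τ, w⟩
        ⟨uNext g E p₁ (Symbol.nonterminal A), σ ++ [(p₁, Symbol.nonterminal A)], w⟩

/-- A move of the unfolded recognizer `R_≡`. -/
def UStep (g : ContextFreeGrammar.{uN} T)
    (E : LRState g → Stack g → Stack g → Prop) (c c' : UCfg g) : Prop :=
  UShiftStep g E c c' ∨ UReduceStep g E c c'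

/-- The unfolded recognizer `R_≡` accepts `w`. -/
def UAccepts (g : ContextFreeGrammar.{uN} T)
    (E : LRState g → Stack g → Stack g → Prop) (w : List T) : Prop :=
  ∃ p : UState g, IsFinal g p.1 ∧
    Relation.ReflTransGen (UStep g E) ⟨uStart g E, [], w⟩
      ⟨p, [(uStart g E, Symbol.nonterminal g.initial)], []⟩

/-- `Pop(p)`: the unfolded states reachable from `p` by a reduction. -/
def PopSet (g : ContextFreeGrammar.{uN} T)
    (E : LRState g → Stack g → Stack g → Prop) (p : UState g) : Set (UState g) :=
  {p' | ∃ (A : g.NT) (α : List (Symbol T g.NT)) (p'' : UState g),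
    IsUState g E p'' ∧
    (some A, α, ([] : List (Symbol T g.NT))) ∈ p.1 ∧
    (some A, ([] : List (Symbol T g.NT)), α) ∈ p''.1 ∧
    uNextStar g E p'' α = p ∧
    next g p''.1 (Symbol.nonterminal A) ≠ ∅ ∧
    uNext g E p'' (Symbol.nonterminal A) = p'}

/-- Paths in the flattening `F_≡` of the unfolded recognizer: terminal
transitions follow `δ_≡` and reductions become ε-transitions. -/
inductive FPath (g : ContextFreeGrammar.{uN} T)
    (E : LRState g → Stack g → Stack g → Prop) : UState g → List T → UState g → Prop
  | refl (p : UState g) : FPath g E p [] p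
  | shift {p : UState g} {x : T} {w : List T} {q : UState g} :
      next g p.1 (Symbol.terminal x) ≠ ∅ →
      FPath g E (uNext g E p (Symbol.terminal x)) w q → FPath g E p (x :: w) q
  | eps {p p' : UState g} {w : List T} {q : UState g} :
      p' ∈ PopSet g E p → FPath g E p' w q → FPath g E p w q

/-- The flattening `F_≡` accepts `w`. -/
def FAccepts (g : ContextFreeGrammar.{uN} T)
    (E : LRState g → Stack g → Stack g → Prop) (w : List T) : Prop :=
  ∃ q : UState g, IsFinal g q.1 ∧ FPath g E (uStart g E) w q

/-- A stack `⟨s₁,X₁⟩…⟨s_k,X_k⟩` is a loop if `δ(s_k,X_k) = s₁`. -/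
def IsLoop (g : ContextFreeGrammar.{uN} T) (τ : Stack g) : Prop :=
  ∃ p q : LRState g × Symbol T g.NT,
    τ.head? = some p ∧ τ.getLast? = some q ∧ next g q.1 q.2 = p.1

/-- A loop is minimal if no proper prefix of it is a loop. -/
def IsMinimalLoop (g : ContextFreeGrammar.{uN} T) (τ : Stack g) : Prop :=
  IsLoop g τ ∧ ∀ τ' : Stack g, τ' <+: τ → τ' ≠ τ → ¬ IsLoop g τ'

/-- A stack is collapsible if it contains a loop as a contiguous segment. -/
def Collapsible (g : ContextFreeGrammar.{uN} T) (σ : Stack g) : Prop :=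
  ∃ ρ τ υ : Stack g, σ = ρ ++ τ ++ υ ∧ IsLoop g τ

/-- `σ` immediately collapses to `σ'`: remove the earliest minimal loop. -/
def ImmediatelyCollapses (g : ContextFreeGrammar.{uN} T) (σ σ' : Stack g) : Prop :=
  ∃ ρ τ υ : Stack g, σ = ρ ++ τ ++ υ ∧ σ' = ρ ++ υ ∧ IsMinimalLoop g τ ∧
    ¬ ∃ ρ' τ' υ' : Stack g, σ = ρ' ++ τ' ++ υ' ∧ ρ' <+: ρ ∧ ρ' ≠ ρ ∧ IsLoop g τ'

/-- `σ` collapses to `σ'` by finitely many immediate collapses. -/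
def Collapses (g : ContextFreeGrammar.{uN} T) : Stack g → Stack g → Prop :=
  Relation.ReflTransGen (ImmediatelyCollapses g)

/-- Two stacks are collapsing-equivalent if they collapse to the same
uncollapsible stack. -/
def CollEquiv (g : ContextFreeGrammar.{uN} T) (σ σ' : Stack g) : Prop :=
  ∃ τ : Stack g, ¬ Collapsible g τ ∧ Collapses g σ τ ∧ Collapses g σ' τ

/-- The collapsing congruence: the restriction of collapsing equivalence to
the sets `Stacks(s)`. -/
def CollCong (g : ContextFreeGrammar.{uN} T) (s : LRState g) (σ σ' : Stack g) : Prop :=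
  Stacks g s σ ∧ Stacks g s σ' ∧ CollEquiv g σ σ'

/-- A CFG is left-linear if every rule has the form `A → Bβ` or `A → β`
with `β` a string of terminals. -/
def LeftLinear (g : ContextFreeGrammar.{uN} T) : Prop :=
  ∀ r ∈ g.rules, (∃ β : List T, r.output = β.map Symbol.terminal) ∨
    (∃ (B : g.NT) (β : List T), r.output = Symbol.nonterminal B :: β.map Symbol.terminal)

/-- A CFG is right-linear if every rule has the form `A → βB` or `A → β`
with `β` a string of terminals. -/
def RightLinear (g : ContextFreeGrammar.{uN} T) : Prop :=
  ∀ r ∈ g.rules, (∃ β : List T, r.output = β.map Symbol.terminal) ∨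
    (∃ (B : g.NT) (β : List T), r.output = β.map Symbol.terminal ++ [Symbol.nonterminal B])

/-- Reachable (genuine) states of `M(G)`. -/
def ReachableState (g : ContextFreeGrammar.{uN} T) (s : LRState g) : Prop :=
  s ≠ ∅ ∧ ∃ α : List (Symbol T g.NT), nextStar g (start g) α = s

end LRApprox

open LRApprox

section Aux

variable {T : Type*} {g : LRApprox.ContextFreeGrammar T}

/-- A dotted rule is "good" if it is a genuine dotted rule of the grammar. -/
def Good (g : LRApprox.ContextFreeGrammar T) (d : DottedRule g) : Prop :=
  (d.1 = none ∧ d.2.1 ++ d.2.2 = [Symbol.nonterminal g.initial]) ∨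
  (∃ (B : g.NT) (r : ContextFreeRule T g.NT), d.1 = some B ∧ r ∈ g.rules ∧
    r.input = B ∧ r.output = d.2.1 ++ d.2.2)

lemma closure_all (hg : LeftLinear g) {R : Set (DottedRule g)}
    {γ : List (Symbol T g.NT)} (hγ : γ ≠ [])
    (hR : ∀ d ∈ R, Good g d ∧ d.2.1 = γ) :
    ∀ d, Closure g R d → Good g d ∧ d.2.1 = γ := by
  intro d hd
  induction hd with
  | base h => exact hR _ h
  | @step A α β B r hc hr hi ih =>
    exfalso
    obtain ⟨hGood, hα⟩ := ih
    dsimp only at hGood hα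
    have hαne : α ≠ [] := hα ▸ hγ
    obtain ⟨a, α', rfl⟩ : ∃ a α', α = a :: α' := by
      cases α with
      | nil => exact absurd rfl hαne
      | cons a α' => exact ⟨a, α', rfl⟩
    rcases hGood with ⟨-, h2⟩ | ⟨C, r', -, hr', -, hout⟩
    all_goals dsimp only at *
    · rw [List.cons_append] at h2
      have h3 := (List.cons_eq_cons.mp h2).2
      simp at h3
    · rcases hg r' hr' with ⟨ts, hts⟩ | ⟨C', ts, hts⟩
      · rw [hts] at hout
        have : Symbol.nonterminal B ∈ ts.map (Symbol.terminal (N := g.NT)) := by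
          rw [hout]
          exact List.mem_append_right _ (List.mem_cons_self)
        simp at this
      · rw [hts, List.cons_append] at hout
        have h3 := (List.cons_eq_cons.mp hout).2
        have : Symbol.nonterminal B ∈ ts.map (Symbol.terminal (N := g.NT)) := by
          rw [h3]
          exact List.mem_append_right _ (List.mem_cons_self)
        simp at this

lemma next_good (hg : LeftLinear g) {s : LRState g} {γ : List (Symbol T g.NT)}
    {X : Symbol T g.NT} (hs : ∀ d ∈ s, Good g d ∧ d.2.1 = γ) :
    ∀ d ∈ next g s X, Good g d ∧ d.2.1 = γ ++ [X] := by
  intro d hd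
  refine closure_all hg (by simp) ?_ d hd
  rintro d' ⟨A, α, β, hm, rfl⟩
  obtain ⟨hG, hα⟩ := hs _ hm
  dsimp at hα; subst hα
  refine ⟨?_, rfl⟩
  rcases hG with ⟨h1, h2⟩ | ⟨B, r, h1, h2, h3, h4⟩
  · exact Or.inl ⟨h1, by simpa [List.append_assoc] using h2⟩
  · exact Or.inr ⟨B, r, h1, h2, h3, by simpa [List.append_assoc] using h4⟩

lemma start_good : ∀ d ∈ start g, Good g d ∧ d.2.1 = ([] : List (Symbol T g.NT)) := by
  intro d hd
  induction hd with
  | base h =>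
    rw [Set.mem_singleton_iff] at h
    subst h
    exact ⟨Or.inl ⟨rfl, rfl⟩, rfl⟩
  | @step A α β B r hc hr hi ih =>
    exact ⟨Or.inr ⟨B, r, rfl, hr, hi, by simp⟩, rfl⟩

lemma nextStar_good (hg : LeftLinear g) :
    ∀ (α : List (Symbol T g.NT)) (s : LRState g) (γ : List (Symbol T g.NT)),
      (∀ d ∈ s, Good g d ∧ d.2.1 = γ) →
      ∀ d ∈ nextStar g s α, Good g d ∧ d.2.1 = γ ++ α := by
  intro α
  induction α with
  | nil => intro s γ hs; simpa [nextStar] using hs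
  | cons X α ih =>
    intro s γ hs d hd
    have := ih (next g s X) (γ ++ [X]) (next_good hg hs) d hd
    simpa [List.append_assoc] using this

lemma stacks_state {s : LRState g} {σ : Stack g} (h : Stacks g s σ) :
    s = nextStar g (start g) (σ.map Prod.snd) := by
  induction h with
  | nil => rfl
  | @snoc q σ X h hne ih =>
    show next g q X = _
    rw [ih]
    simp [nextStar, List.foldl_append]

lemma next_empty (X : Symbol T g.NT) : next g (∅ : LRState g) X = ∅ := by
  ext d
  simp only [next, Set.mem_setOf_eq, Set.mem_empty_iff_false, iff_false]
  intro h
  induction h with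
  | base h => obtain ⟨A, α, β, h, -⟩ := h; exact h
  | step r hc hr hi ih => exact ih

lemma stacks_unique_of_map {s s' : LRState g} {σ σ' : Stack g}
    (h : Stacks g s σ) (h' : Stacks g s' σ')
    (hm : σ.map Prod.snd = σ'.map Prod.snd) : σ = σ' := by
  induction h generalizing s' σ' with
  | nil =>
    cases h' with
    | nil => rfl
    | snoc h2 hne2 => simp at hm
  | @snoc q τ X h hne ih =>
    cases h' with
    | nil => simp at hm
    | @snoc q' τ' X' h2 hne2 =>
      rw [List.map_append, List.map_append] at hm
      obtain ⟨hm1, hm2⟩ := List.append_inj' hm rfl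
      have hτ : τ = τ' := ih h2 hm1
      have hX : X = X' := by simpa using hm2
      have hq : q = q' := by
        rw [stacks_state h, stacks_state h2, hm1]
      rw [hτ, hX, hq]

lemma stacks_exists :
    ∀ α : List (Symbol T g.NT), nextStar g (start g) α ≠ ∅ →
      ∃ σ : Stack g, Stacks g (nextStar g (start g) α) σ := by
  intro α
  induction α using List.reverseRecOn with
  | nil => intro _; exact ⟨[], Stacks.nil⟩
  | append_singleton α X ih =>
    intro hne
    have hfold : nextStar g (start g) (α ++ [X]) = next g (nextStar g (start g) α) X := by
      unfold nextStar; rw [List.foldl_append]; rfl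
    rw [hfold] at hne ⊢
    have hne' : nextStar g (start g) α ≠ ∅ := by
      intro h
      rw [h, next_empty] at hne
      exact hne rfl
    obtain ⟨σ, hσ⟩ := ih hne'
    exact ⟨σ ++ [(nextStar g (start g) α, X)], Stacks.snoc hσ hne⟩

end Aux

/-- In a left-linear CFG, any two dotted rules in a reachable
state of `M(G)` have the same string before the dot; consequently each
reachable state has exactly one possible stack, hence a single
collapsing-congruence class, so unfolding leaves `M(G)` unchanged. -/
theorem left_linear_single_stack {T : Type*} (g : LRApprox.ContextFreeGrammar T)
    (hg : LeftLinear g) :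
    (∀ s : LRState g, ReachableState g s →
      ∀ d ∈ s, ∀ d' ∈ s, (d : DottedRule g).2.1 = (d' : DottedRule g).2.1) ∧
    (∀ s : LRState g, ReachableState g s → ∃! σ : Stack g, Stacks g s σ) ∧
    (∀ s : LRState g, ReachableState g s →
      ∃! c : Set (Stack g), ∃ σ : Stack g, Stacks g s σ ∧
        c = {σ' : Stack g | Stacks g s σ' ∧ CollEquiv g σ σ'}) := by
  constructor
  · rintro s ⟨hne, α, rfl⟩ d hd d' hd'
    have h1 := nextStar_good hg α (start g) [] start_good d hd
    have h2 := nextStar_good hg α (start g) [] start_good d' hd'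
    rw [h1.2, h2.2]
  have huniq : ∀ s : LRState g, ReachableState g s → ∃! σ : Stack g, Stacks g s σ := by
    rintro s ⟨hne, α, rfl⟩
    obtain ⟨σ, hσ⟩ := stacks_exists α hne
    refine ⟨σ, hσ, ?_⟩
    intro σ' hσ'
    obtain ⟨d, hd⟩ := Set.nonempty_iff_ne_empty.2 hne
    have k1 : d.2.1 = σ'.map Prod.snd := by
      have := stacks_state hσ'
      exact (nextStar_good hg _ (start g) [] start_good d (this ▸ hd)).2
    have k2 : d.2.1 = σ.map Prod.snd := by
      have := stacks_state hσ
      exact (nextStar_good hg _ (start g) [] start_good d (this ▸ hd)).2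
    exact stacks_unique_of_map hσ' hσ (by rw [← k1, ← k2])
  refine ⟨huniq, ?_⟩
  intro s hs
  obtain ⟨σ, hσ, hu⟩ := huniq s hs
  refine ⟨{σ' : Stack g | Stacks g s σ' ∧ CollEquiv g σ σ'}, ⟨σ, hσ, rfl⟩, ?_⟩
  rintro c ⟨σ₂, h₂, rfl⟩
  rw [hu σ₂ h₂]
end

section
/- If every defining subgrammar def(X) in the strongly-connected-component decomposition of a context-free grammar G is left-linear or right-linear, then the language L(G) is regular. -/
/-!
Infrastructure for the strongly-connected-component decomposition of a
context-free grammar (Pereira & Wright): the graph `conn(G)`, the components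
`comp(X)`, the defining subgrammars `def(X)` (with out-of-component
nonterminals treated as pseudoterminals), and language substitution.
-/

namespace LRApprox

open scoped Classical

universe uN uT

variable {T : Type uT}

/-- One step of context-free transformation. -/
def ContextFreeGrammar.Produces {T : Type*} (g : ContextFreeGrammar T) (u v : List (Symbol T g.NT)) : Prop :=
  ∃ r ∈ g.rules, r.Rewrites u v

/-- Any number of steps of context-free transformation. -/
abbrev ContextFreeGrammar.Derives {T : Type*} (g : ContextFreeGrammar T) :
    List (Symbol T g.NT) → List (Symbol T g.NT) → Prop :=
  Relation.ReflTransGen g.Produces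

/-- The string is derivable from the initial nonterminal. -/
def ContextFreeGrammar.Generates {T : Type*} (g : ContextFreeGrammar T) (s : List (Symbol T g.NT)) : Prop :=
  g.Derives [Symbol.nonterminal g.initial] s

/-- The language generated by the grammar. -/
def ContextFreeGrammar.language {T : Type*} (g : ContextFreeGrammar T) : Language T :=
  { w : List T | g.Generates (w.map Symbol.terminal) }

/-- The edge relation of the graph `conn(G)`: an arc from `X` to `Y` whenever
`Y` occurs in the right-hand side of a rule of `G` whose left-hand side is `X`. -/
def ConnStep (g : ContextFreeGrammar.{uN} T) (X Y : g.NT) : Prop :=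
  ∃ r ∈ g.rules, r.input = X ∧ Symbol.nonterminal Y ∈ r.output

/-- `X` and `Y` lie in the same strongly connected component of `conn(G)`. -/
def SameComp (g : ContextFreeGrammar.{uN} T) (X Y : g.NT) : Prop :=
  Relation.ReflTransGen (ConnStep g) X Y ∧ Relation.ReflTransGen (ConnStep g) Y X

/-- Conversion of a symbol of `G` into a symbol of the defining subgrammar
`def(X)`: nonterminals outside `comp(X)` become pseudoterminals. -/
noncomputable def convSym (g : ContextFreeGrammar.{uN} T) (X : g.NT) :
    Symbol T g.NT → Symbol (T ⊕ g.NT) {Y : g.NT // SameComp g X Y}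
  | .terminal t => .terminal (Sum.inl t)
  | .nonterminal Y =>
      if h : SameComp g X Y then .nonterminal ⟨Y, h⟩ else .terminal (Sum.inr Y)

/-- The defining subgrammar `def(X)`: start symbol `X`, nonterminals
`comp(X)`, terminals `Σ` plus the pseudoterminals, and the rules of `G` whose
left-hand side lies in `comp(X)`. -/
noncomputable def defSub (g : ContextFreeGrammar.{uN} T) (X : g.NT) :
    ContextFreeGrammar.{uN} (T ⊕ g.NT) where
  NT := {Y : g.NT // SameComp g X Y}
  initial := ⟨X, Relation.ReflTransGen.refl, Relation.ReflTransGen.refl⟩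
  rules :=
    (g.rules.toList.filterMap fun r =>
      if h : SameComp g X r.input then
        some ⟨⟨r.input, h⟩, r.output.map (convSym g X)⟩
      else none).toFinset

/-- `Y` is a pseudoterminal of `def(X)`: it is not in `comp(X)` but occurs in
the right-hand side of a rule whose left-hand side is in `comp(X)`. -/
def IsPseudo (g : ContextFreeGrammar.{uN} T) (X Y : g.NT) : Prop :=
  ¬ SameComp g X Y ∧
    ∃ r ∈ g.rules, SameComp g X r.input ∧ Symbol.nonterminal Y ∈ r.output

/-- `L_G(X)`: the terminal strings derivable from the nonterminal `X` in `G`. -/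
def langFrom (g : ContextFreeGrammar.{uN} T) (X : g.NT) : Language T :=
  {w : List T | g.Derives [Symbol.nonterminal X] (w.map Symbol.terminal)}

/-- Extension of a substitution `f` from symbols to strings:
`f(c₁…c_n) = f(c₁)⋯f(c_n)`, with `f(ε) = {ε}`. -/
def substStr {α : Type*} {β : Type*} (f : α → Language β) : List α → Language β
  | [] => 1
  | c :: u => f c * substStr f u

/-- Extension of a substitution to a language: `f(L) = ⋃_{u ∈ L} f(u)`. -/
def substLang {α : Type*} {β : Type*} (f : α → Language β) (L : Language α) :
    Language β :=
  ⋃ u ∈ L, substStr f u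

namespace ContextFreeGrammar

variable {g : ContextFreeGrammar.{uN} T}

@[refl]
lemma Derives.refl (w : List (Symbol T g.NT)) : g.Derives w w :=
  Relation.ReflTransGen.refl

lemma Produces.single {v w : List (Symbol T g.NT)} (hvw : g.Produces v w) : g.Derives v w :=
  Relation.ReflTransGen.single hvw

lemma Derives.trans {u v w : List (Symbol T g.NT)} (huv : g.Derives u v) (hvw : g.Derives v w) :
    g.Derives u w :=
  Relation.ReflTransGen.trans huv hvw

lemma Derives.trans_produces {u v w : List (Symbol T g.NT)}
    (huv : g.Derives u v) (hvw : g.Produces v w) :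
    g.Derives u w :=
  huv.trans hvw.single

lemma Produces.trans_derives {u v w : List (Symbol T g.NT)}
    (huv : g.Produces u v) (hvw : g.Derives v w) :
    g.Derives u w :=
  huv.single.trans hvw

lemma Produces.append_left {v w : List (Symbol T g.NT)}
    (hvw : g.Produces v w) (p : List (Symbol T g.NT)) :
    g.Produces (p ++ v) (p ++ w) :=
  match hvw with | ⟨r, hrmem, hrvw⟩ => ⟨r, hrmem, hrvw.append_left p⟩

lemma Produces.append_right {v w : List (Symbol T g.NT)}
    (hvw : g.Produces v w) (p : List (Symbol T g.NT)) :
    g.Produces (v ++ p) (w ++ p) :=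
  match hvw with | ⟨r, hrmem, hrvw⟩ => ⟨r, hrmem, hrvw.append_right p⟩

lemma Derives.append_left {v w : List (Symbol T g.NT)}
    (hvw : g.Derives v w) (p : List (Symbol T g.NT)) :
    g.Derives (p ++ v) (p ++ w) := by
  induction hvw with
  | refl => exact Derives.refl _
  | tail _ last ih => exact ih.trans_produces <| last.append_left p

lemma Derives.append_right {v w : List (Symbol T g.NT)}
    (hvw : g.Derives v w) (p : List (Symbol T g.NT)) :
    g.Derives (v ++ p) (w ++ p) := by
  induction hvw with
  | refl => exact Derives.refl _
  | tail _ last ih => exact ih.trans_produces <| last.append_right p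

/-- Grammar for a reversed language. -/
abbrev reverse (g : ContextFreeGrammar.{uN} T) : ContextFreeGrammar.{uN} T :=
  ⟨g.NT, g.initial, g.rules.map (⟨ContextFreeRule.reverse, ContextFreeRule.reverse_injective⟩)⟩

lemma produces_reverse_comm {u v : List (Symbol T g.NT)} :
    g.reverse.Produces u v ↔ g.Produces u.reverse v.reverse := by
  constructor
  · rintro ⟨r, hr, hrw⟩
    obtain ⟨r0, hr0, rfl⟩ := Finset.mem_map.mp hr
    exact ⟨r0, hr0, ContextFreeRule.rewrites_reverse_comm.mp hrw⟩
  · rintro ⟨r, hr, hrw⟩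
    exact ⟨r.reverse, Finset.mem_map_of_mem _ hr, ContextFreeRule.rewrites_reverse_comm.mpr hrw⟩

lemma derives_reverse_comm {u v : List (Symbol T g.NT)} :
    g.reverse.Derives u v ↔ g.Derives u.reverse v.reverse := by
  constructor
  · intro h
    induction h with
    | refl => exact Derives.refl _
    | tail _ hp ih => exact ih.trans_produces (produces_reverse_comm.mp hp)
  · intro h
    have key : ∀ {a b : List (Symbol T g.NT)}, g.Derives a b →
        g.reverse.Derives a.reverse b.reverse := by
      intro a b hab
      induction hab with
      | refl => exact Derives.refl _
      | tail _ hp ih =>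
        exact ih.trans_produces (produces_reverse_comm.mpr (by simpa using hp))
    simpa using key h

lemma language_reverse : g.reverse.language = g.language.reverse := by
  ext w
  show g.reverse.Derives [Symbol.nonterminal g.reverse.initial] (w.map Symbol.terminal) ↔
    g.Derives [Symbol.nonterminal g.initial] (w.reverse.map Symbol.terminal)
  exact derives_reverse_comm.trans (by rw [List.map_reverse]; exact Iff.rfl)

end ContextFreeGrammar

variable {α : Type*} {β : Type*}

/-- Left derivative of a language by a word. -/
def derivWord (u : List α) (L : Language α) : Language α := {w | u ++ w ∈ L}

@[simp] lemma derivWord_nil (L : Language α) : derivWord [] L = L := rfl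

lemma derivWord_cons (a : α) (u : List α) (L : Language α) :
    derivWord (a :: u) L = derivWord u (derivWord [a] L) := by
  rfl

lemma derivWord_append (u v : List α) (L : Language α) :
    derivWord (u ++ v) L = derivWord v (derivWord u L) := by
  ext w; simp only [derivWord, Set.mem_setOf_eq, List.append_assoc]; exact Iff.rfl

/-- The set of left quotients (Myhill–Nerode classes' representatives). -/
def Derivs (L : Language α) : Set (Language α) := Set.range fun u => derivWord u L

lemma self_mem_derivs (L : Language α) : L ∈ Derivs L := ⟨[], rfl⟩

lemma derivWord_mem_derivs (L : Language α) (u : List α) : derivWord u L ∈ Derivs L := ⟨u, rfl⟩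

/-- Nerode: finitely many left quotients implies regular. -/
theorem isRegular_of_finite_derivs {L : Language α} (h : (Derivs L).Finite) : L.IsRegular := by
  haveI : Fintype (Derivs L) := h.fintype
  set M : DFA α (Derivs L) :=
    { step := fun s a => ⟨derivWord [a] s.1, by
        obtain ⟨u, hu⟩ := s.2
        exact ⟨u ++ [a], by simp only []; rw [derivWord_append]; simp only at hu; rw [hu]⟩⟩
      start := ⟨L, self_mem_derivs L⟩
      accept := {s | [] ∈ s.1} } with hM
  have key : ∀ (u : List α) (s : Derivs L), (M.evalFrom s u).1 = derivWord u s.1 := by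
    intro u
    induction u with
    | nil => intro s; rfl
    | cons a u ih =>
      intro s
      have : M.evalFrom s (a :: u) = M.evalFrom (M.step s a) u := rfl
      rw [this, ih, derivWord_cons]
  have hacc : M.accepts = L := by
    ext w
    have : w ∈ M.accepts ↔ M.evalFrom M.start w ∈ M.accept := Iff.rfl
    rw [this]
    have := key w M.start
    constructor
    · intro hw
      have h2 : [] ∈ derivWord w L := by rw [← this]; exact hw
      have h3 : w ++ [] ∈ L := h2
      simpa using h3
    · intro hw
      show [] ∈ (M.evalFrom M.start w).1
      rw [this]
      show w ++ [] ∈ L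
      simpa using hw
  exact ⟨Fin (Fintype.card (Derivs L)), inferInstance, DFA.reindex (Fintype.equivFin _) M,
    by rw [DFA.accepts_reindex, hacc]⟩

/-- Regular implies finitely many left quotients. -/
theorem finite_derivs_of_isRegular {L : Language α} (h : L.IsRegular) : (Derivs L).Finite := by
  obtain ⟨σ, _, M, rfl⟩ := h
  have : Derivs M.accepts ⊆ (fun s : σ => {w | M.evalFrom s w ∈ M.accept}) '' Set.univ := by
    rintro _ ⟨u, rfl⟩
    refine ⟨M.evalFrom M.start u, Set.mem_univ _, ?_⟩
    ext w
    simp only [derivWord, Set.mem_setOf_eq]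
    show M.evalFrom (M.evalFrom M.start u) w ∈ M.accept ↔ (u ++ w) ∈ M.accepts
    rw [DFA.mem_accepts, DFA.eval, M.evalFrom_of_append]
  exact Set.Finite.subset (Set.finite_univ.image _) this

/-- Closure of regular languages under reversal. -/
theorem isRegular_reverse {L : Language α} (h : L.IsRegular) : L.reverse.IsRegular := by
  obtain ⟨σ, _, M, rfl⟩ := h
  apply isRegular_of_finite_derivs
  have : Derivs M.accepts.reverse ⊆
      (fun P : Set σ => Language.reverse {w | M.evalFrom M.start w ∈ P}) '' Set.univ := by
    rintro _ ⟨u, rfl⟩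
    refine ⟨{s | M.evalFrom s u.reverse ∈ M.accept}, Set.mem_univ _, ?_⟩
    ext w
    show w.reverse ∈ {v | M.evalFrom M.start v ∈ {s | M.evalFrom s u.reverse ∈ M.accept}} ↔
      (u ++ w) ∈ Language.reverse M.accepts
    rw [Language.mem_reverse, DFA.mem_accepts, DFA.eval, List.reverse_append,
      M.evalFrom_of_append]
    rfl
  exact Set.Finite.subset (Set.finite_univ.image _) this


variable {α : Type*} {β : Type*}

/-- Union of a set of languages. -/
def bigU (Q : Set (Language β)) : Language β := {x | ∃ P ∈ Q, x ∈ P}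

lemma mem_bigU {Q : Set (Language β)} {x : List β} : x ∈ bigU Q ↔ ∃ P ∈ Q, x ∈ P := Iff.rfl

lemma mem_substLang {f : α → Language β} {L : Language α} {x : List β} :
    x ∈ substLang f L ↔ ∃ u ∈ L, x ∈ substStr f u := by
  constructor
  · intro hx
    obtain ⟨s, ⟨u, rfl⟩, hs⟩ := hx
    obtain ⟨s', ⟨hu, rfl⟩, hx'⟩ := hs
    exact ⟨u, hu, hx'⟩
  · rintro ⟨u, hu, hx⟩
    exact Set.mem_iUnion.mpr ⟨u, Set.mem_iUnion.mpr ⟨hu, hx⟩⟩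

lemma substStr_append (f : α → Language β) (u v : List α) :
    substStr f (u ++ v) = substStr f u * substStr f v := by
  induction u with
  | nil => show substStr f v = 1 * substStr f v; rw [one_mul]
  | cons c u ih =>
    show f c * substStr f (u ++ v) = (f c * substStr f u) * substStr f v
    rw [ih, mul_assoc]

lemma substLang_zero (f : α → Language β) : substLang f (0 : Language α) = 0 := by
  ext x
  rw [mem_substLang]
  constructor
  · rintro ⟨u, hu, -⟩
    exact absurd hu (Language.notMem_zero u)
  · intro hx
    exact absurd hx (Language.notMem_zero x)

lemma substStr_split {f : α → Language β} {x : List β} :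
    ∀ {u₀ : List α} {w : List β}, w ++ x ∈ substStr f u₀ →
    (∃ u u', u₀ = u ++ u' ∧ w ∈ substStr f u ∧ x ∈ substStr f u') ∨
    (∃ u c u' y z z' r, u₀ = u ++ c :: u' ∧ w = y ++ z ∧ x = z' ++ r ∧
      y ∈ substStr f u ∧ z ++ z' ∈ f c ∧ r ∈ substStr f u') := by
  intro u₀
  induction u₀ with
  | nil =>
    intro w h
    rw [show substStr f [] = 1 from rfl, Language.mem_one] at h
    obtain ⟨hw, hx⟩ := List.append_eq_nil_iff.mp h
    subst hw; subst hx
    exact Or.inl ⟨[], [], rfl, (Language.mem_one _).mpr rfl, (Language.mem_one _).mpr rfl⟩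
  | cons c u₁ ih =>
    intro w h
    rw [show substStr f (c :: u₁) = f c * substStr f u₁ from rfl, Language.mem_mul] at h
    obtain ⟨p, hp, q, hq, hpq⟩ := h
    rcases List.append_eq_append_iff.mp hpq.symm with ⟨z', hpz, hxz⟩ | ⟨t, hwt, hqt⟩
    · exact Or.inr ⟨[], c, u₁, [], w, z', q, rfl, rfl, hxz, (Language.mem_one _).mpr rfl,
        by rw [← hpz]; exact hp, hq⟩
    · have ht : t ++ x ∈ substStr f u₁ := by rw [← hqt]; exact hq
      rcases ih ht with ⟨u, u', hu, htu, hxu⟩ | ⟨u, c', u', y, z, z', r, hu, htyz, hxz, hy, hz, hr⟩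
      · refine Or.inl ⟨c :: u, u', by rw [hu, List.cons_append], ?_, hxu⟩
        rw [show substStr f (c :: u) = f c * substStr f u from rfl, Language.mem_mul]
        exact ⟨p, hp, t, htu, hwt.symm⟩
      · refine Or.inr ⟨c :: u, c', u', p ++ y, z, z', r, by rw [hu, List.cons_append], ?_, hxz,
          ?_, hz, hr⟩
        · rw [hwt, htyz, List.append_assoc]
        · rw [show substStr f (c :: u) = f c * substStr f u from rfl, Language.mem_mul]
          exact ⟨p, hp, y, hy, rfl⟩

/-- The family of languages appearing in the left quotients of a substitution. -/
def substT (f : α → Language β) (L : Language α) (w : List β) : Set (Language β) :=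
  {P | ∃ u c z y, w = y ++ z ∧ y ∈ substStr f u ∧
    P = derivWord z (f c) * substLang f (derivWord (u ++ [c]) L)} ∪
  {P | ∃ u, w ∈ substStr f u ∧ P = substLang f (derivWord u L)}

lemma derivWord_substLang (f : α → Language β) (L : Language α) (w : List β) :
    derivWord w (substLang f L) = bigU (substT f L w) := by
  ext x
  rw [mem_bigU]
  constructor
  · intro hx
    have hx' : w ++ x ∈ substLang f L := hx
    rw [mem_substLang] at hx'
    obtain ⟨u₀, hu₀, hmem⟩ := hx'
    rcases substStr_split hmem with ⟨u, u', hu, hw, hx''⟩ |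
      ⟨u, c, u', y, z, z', r, hu, hwyz, hxzr, hy, hzz, hr⟩
    · refine ⟨substLang f (derivWord u L), Or.inr ⟨u, hw, rfl⟩, ?_⟩
      rw [mem_substLang]
      refine ⟨u', ?_, hx''⟩
      show u ++ u' ∈ L
      rw [← hu]; exact hu₀
    · refine ⟨derivWord z (f c) * substLang f (derivWord (u ++ [c]) L),
        Or.inl ⟨u, c, z, y, hwyz, hy, rfl⟩, ?_⟩
      rw [Language.mem_mul]
      refine ⟨z', hzz, r, ?_, hxzr.symm⟩
      rw [mem_substLang]
      refine ⟨u', ?_, hr⟩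
      show (u ++ [c]) ++ u' ∈ L
      rw [List.append_assoc, List.singleton_append, ← hu]
      exact hu₀
  · rintro ⟨P, hP | hP, hx⟩
    · obtain ⟨u, c, z, y, hwyz, hy, rfl⟩ := hP
      rw [Language.mem_mul] at hx
      obtain ⟨z', hz', r, hr, hx⟩ := hx
      rw [mem_substLang] at hr
      obtain ⟨u', hu', hru'⟩ := hr
      show w ++ x ∈ substLang f L
      rw [mem_substLang]
      refine ⟨u ++ c :: u', ?_, ?_⟩
      · have h2 : (u ++ [c]) ++ u' ∈ L := hu'
        rwa [List.append_assoc, List.singleton_append] at h2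
      · rw [show (u ++ c :: u' : List α) = u ++ [c] ++ u' by simp, substStr_append,
          substStr_append]
        rw [hwyz, ← hx]
        have hzc : z ++ z' ∈ substStr f [c] := by
          show z ++ z' ∈ f c * substStr f ([] : List α)
          rw [show substStr f ([] : List α) = 1 from rfl, mul_one]
          exact hz'
        have h3 := Language.append_mem_mul (Language.append_mem_mul hy hzc) hru'
        simpa [List.append_assoc] using h3
    · obtain ⟨u, hw, rfl⟩ := hP
      rw [mem_substLang] at hx
      obtain ⟨u', hu', hxu'⟩ := hx
      show w ++ x ∈ substLang f L
      rw [mem_substLang]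
      exact ⟨u ++ u', hu', by rw [substStr_append]; exact Language.append_mem_mul hw hxu'⟩

theorem finite_derivs_substLang {f : α → Language β} {L : Language α} {S : Set α}
    (hS : S.Finite) (hsupp : ∀ u ∈ L, ∀ c ∈ u, c ∈ S)
    (hf : ∀ c ∈ S, (Derivs (f c)).Finite) (hL : (Derivs L).Finite) :
    (Derivs (substLang f L)).Finite := by
  classical
  set V : Set (Language β) :=
    insert 0 ((fun p : Language β × Language α => p.1 * substLang f p.2) ''
      ((⋃ c ∈ S, Derivs (f c)) ×ˢ Derivs L)) ∪ ((fun L' => substLang f L') '' Derivs L)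
    with hV
  have hVfin : V.Finite :=
    Set.Finite.union (Set.Finite.insert _ (Set.Finite.image _ ((hS.biUnion hf).prod hL)))
      (hL.image _)
  have hT : ∀ w, substT f L w ⊆ V := by
    rintro w P (⟨u, c, z, y, hw, hy, rfl⟩ | ⟨u, hw, rfl⟩)
    · by_cases hc : c ∈ S
      · exact Or.inl (Set.mem_insert_of_mem _
          ⟨(derivWord z (f c), derivWord (u ++ [c]) L),
            ⟨Set.mem_biUnion hc (derivWord_mem_derivs _ _), derivWord_mem_derivs _ _⟩, rfl⟩)
      · have hempty : derivWord (u ++ [c]) L = (0 : Language α) := by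
          ext u'
          simp only [Language.notMem_zero, iff_false]
          intro hmem
          have : (u ++ [c]) ++ u' ∈ L := hmem
          exact hc (hsupp _ this c (by simp))
        rw [hempty, substLang_zero, mul_zero]
        exact Or.inl (Set.mem_insert _ _)
    · exact Or.inr ⟨derivWord u L, derivWord_mem_derivs _ _, rfl⟩
  have hsub : Derivs (substLang f L) ⊆ (fun Q => bigU Q) '' {Q | Q ⊆ V} := by
    rintro _ ⟨w, rfl⟩
    exact ⟨substT f L w, hT w, (derivWord_substLang f L w).symm⟩
  exact Set.Finite.subset (Set.Finite.image _ hVfin.finite_subsets) hsub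

section DervN

variable {g : ContextFreeGrammar.{uN} T}

/-- Derivation in exactly `n` steps. -/
inductive DervN (g : ContextFreeGrammar.{uN} T) :
    ℕ → List (Symbol T g.NT) → List (Symbol T g.NT) → Prop
  | refl (u : List (Symbol T g.NT)) : DervN g 0 u u
  | head {n : ℕ} {u v w : List (Symbol T g.NT)} :
      g.Produces u v → DervN g n v w → DervN g (n + 1) u w

lemma DervN.derives {n u v} (h : DervN g n u v) : g.Derives u v := by
  induction h with
  | refl => rfl
  | head hp _ ih => exact hp.trans_derives ih

lemma DervN.tail {n u v w} (h : DervN g n u v) (hp : g.Produces v w) : DervN g (n + 1) u w := by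
  induction h with
  | refl u => exact DervN.head hp (DervN.refl _)
  | head hp' _ ih => exact DervN.head hp' (ih hp)

lemma derives_iff_dervN {u v} : g.Derives u v ↔ ∃ n, DervN g n u v := by
  constructor
  · intro h
    induction h with
    | refl => exact ⟨0, DervN.refl _⟩
    | tail _ hp ih => obtain ⟨n, hn⟩ := ih; exact ⟨n + 1, hn.tail hp⟩
  · rintro ⟨n, h⟩
    exact h.derives

lemma not_produces_terminals {w : List T} {v : List (Symbol T g.NT)} :
    ¬ g.Produces (w.map Symbol.terminal) v := by
  rintro ⟨r, -, hr⟩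
  obtain ⟨p, q, hin, -⟩ := hr.exists_parts
  have : Symbol.nonterminal r.input ∈ w.map (Symbol.terminal (N := g.NT)) := by
    rw [hin]
    simp
  obtain ⟨t, -, ht⟩ := List.mem_map.mp this
  cases ht

lemma DervN.terminals_eq {n : ℕ} {w : List T} {v : List (Symbol T g.NT)}
    (h : DervN g n (w.map Symbol.terminal) v) : v = w.map Symbol.terminal := by
  cases h with
  | refl => rfl
  | head hp _ => exact absurd hp not_produces_terminals

lemma DervN.nil_eq {n : ℕ} {v : List (Symbol T g.NT)} (h : DervN g n [] v) : v = [] :=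
  DervN.terminals_eq (w := []) h

lemma rewrites_singleton_nt {r : ContextFreeRule T g.NT} {A : g.NT} {v : List (Symbol T g.NT)}
    (h : r.Rewrites [Symbol.nonterminal A] v) : r.input = A ∧ v = r.output := by
  obtain ⟨p, q, hin, hout⟩ := h.exists_parts
  have hlen := congrArg List.length hin
  simp only [List.length_append, List.length_cons, List.length_nil] at hlen
  have hp : p = [] := List.length_eq_zero_iff.mp (by omega)
  have hq : q = [] := List.length_eq_zero_iff.mp (by omega)
  subst hp; subst hq
  simp only [List.nil_append, List.append_nil] at hin hout
  have h1 : A = r.input := by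
    injection hin with h1 h2
    exact Symbol.nonterminal.inj h1
  exact ⟨h1.symm, by rw [hout]⟩

/-- Splitting a counted derivation along an append. -/
lemma DervN.append_split : ∀ {n : ℕ} {y x : List (Symbol T g.NT)}, DervN g n y x →
    ∀ u v, y = u ++ v →
    ∃ n₁ n₂ x₁ x₂, n₁ + n₂ = n ∧ x = x₁ ++ x₂ ∧ DervN g n₁ u x₁ ∧ DervN g n₂ v x₂ := by
  intro n y x h
  induction h with
  | refl y =>
    intro u v huv
    exact ⟨0, 0, u, v, rfl, huv, DervN.refl u, DervN.refl v⟩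
  | @head n y z x hp h ih =>
    intro u v huv
    obtain ⟨r, hrmem, hr⟩ := hp
    obtain ⟨p, q, hin, hout⟩ := hr.exists_parts
    rw [huv, List.append_assoc] at hin
    rcases List.append_eq_append_iff.mp hin with ⟨a', hpa, hva⟩ | ⟨c', huc, hcv⟩
    · -- p = u ++ a', v = a' ++ ([nt] ++ q) : nonterminal inside v
      have hz : z = u ++ (a' ++ r.output ++ q) := by
        rw [hout, hpa]
        simp [List.append_assoc]
      obtain ⟨n₁, n₂, x₁, x₂, hnn, hx, h1, h2⟩ := ih u (a' ++ r.output ++ q) hz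
      refine ⟨n₁, n₂ + 1, x₁, x₂, by omega, hx, h1, DervN.head ⟨r, hrmem, ?_⟩ h2⟩
      have hv : v = a' ++ [Symbol.nonterminal r.input] ++ q := by
        rw [hva]; simp [List.append_assoc]
      rw [hv]
      exact ContextFreeRule.rewrites_of_exists_parts r a' q
    · -- u = p ++ c',  [nt] ++ q = c' ++ v
      cases c' with
      | nil =>
        -- u = p, v = [nt] ++ q
        rw [List.append_nil] at huc
        have hz : z = u ++ (r.output ++ q) := by
          rw [hout, huc]
          simp [List.append_assoc]
        obtain ⟨n₁, n₂, x₁, x₂, hnn, hx, h1, h2⟩ := ih u (r.output ++ q) hz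
        refine ⟨n₁, n₂ + 1, x₁, x₂, by omega, hx, h1, DervN.head ⟨r, hrmem, ?_⟩ h2⟩
        have hv : v = [] ++ [Symbol.nonterminal r.input] ++ q := by
          rw [List.nil_append] at hcv
          rw [← hcv]; simp
        rw [hv]
        exact ContextFreeRule.rewrites_of_exists_parts r [] q
      | cons s c'' =>
        rw [List.singleton_append] at hcv
        injection hcv with hs hq
        subst hs
        have hz : z = (p ++ r.output ++ c'') ++ v := by
          rw [hout, hq]
          simp [List.append_assoc]
        obtain ⟨n₁, n₂, x₁, x₂, hnn, hx, h1, h2⟩ := ih (p ++ r.output ++ c'') v hz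
        refine ⟨n₁ + 1, n₂, x₁, x₂, by omega, hx, DervN.head ⟨r, hrmem, ?_⟩ h1, h2⟩
        have hu : u = p ++ [Symbol.nonterminal r.input] ++ c'' := by
          rw [huc]; simp
        rw [hu]
        exact ContextFreeRule.rewrites_of_exists_parts r p c''

/-- Derivation-splitting (uncounted version). -/
lemma derives_append_split {u v x : List (Symbol T g.NT)} (h : g.Derives (u ++ v) x) :
    ∃ x₁ x₂, x = x₁ ++ x₂ ∧ g.Derives u x₁ ∧ g.Derives v x₂ := by
  obtain ⟨n, hn⟩ := derives_iff_dervN.mp h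
  obtain ⟨n₁, n₂, x₁, x₂, -, hx, h1, h2⟩ := hn.append_split u v rfl
  exact ⟨x₁, x₂, hx, h1.derives, h2.derives⟩

/-- A terminal word splits along `map Symbol.terminal` of an append target. -/
lemma terminal_map_append_split {w : List T} {x₁ x₂ : List (Symbol T g.NT)}
    (h : w.map Symbol.terminal = x₁ ++ x₂) :
    ∃ w₁ w₂, w = w₁ ++ w₂ ∧ x₁ = w₁.map Symbol.terminal ∧ x₂ = w₂.map Symbol.terminal := by
  obtain ⟨w₁, w₂, hw, h1, h2⟩ := List.map_eq_append_iff.mp h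
  exact ⟨w₁, w₂, hw, h1.symm, h2.symm⟩

end DervN

section RightLinear

variable {T' : Type*} {g' : ContextFreeGrammar.{uN} T'}

/-- The language derived from a sentential form. -/
def Lng (g' : ContextFreeGrammar.{uN} T') (s : List (Symbol T' g'.NT)) : Language T' :=
  {w | g'.Derives s (w.map Symbol.terminal)}

lemma DervN.zero_eq {u v : List (Symbol T' g'.NT)} (h : DervN g' 0 u v) : u = v := by
  cases h; rfl

lemma DervN.succ_head {n : ℕ} {u w : List (Symbol T' g'.NT)} (h : DervN g' (n + 1) u w) :
    ∃ v, g'.Produces u v ∧ DervN g' n v w := by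
  cases h with
  | head hp h' => exact ⟨_, hp, h'⟩

lemma mem_Lng {s : List (Symbol T' g'.NT)} {w : List T'} :
    w ∈ Lng g' s ↔ g'.Derives s (w.map Symbol.terminal) := Iff.rfl

lemma map_terminal_inj {u v : List T'} (h : u.map (Symbol.terminal (N := g'.NT)) =
    v.map Symbol.terminal) : u = v :=
  List.map_injective_iff.mpr (fun _ _ hab => Symbol.terminal.inj hab) h

lemma Lng_nil {w : List T'} : w ∈ Lng g' [] ↔ w = [] := by
  constructor
  · intro h
    obtain ⟨n, hn⟩ := derives_iff_dervN.mp h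
    have := hn.nil_eq
    cases w with
    | nil => rfl
    | cons t w' => exact absurd this.symm (by simp)
  · rintro rfl
    exact ContextFreeGrammar.Derives.refl _

lemma Lng_terminals {β w : List T'} : w ∈ Lng g' (β.map Symbol.terminal) ↔ w = β := by
  constructor
  · intro h
    obtain ⟨n, hn⟩ := derives_iff_dervN.mp h
    have h2 := hn.terminals_eq
    exact (map_terminal_inj h2.symm).symm
  · rintro rfl
    exact ContextFreeGrammar.Derives.refl _

lemma Lng_terminal_cons {t : T'} {s : List (Symbol T' g'.NT)} {w : List T'} :
    w ∈ Lng g' (Symbol.terminal t :: s) ↔ ∃ w', w = t :: w' ∧ w' ∈ Lng g' s := by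
  constructor
  · intro h
    have h' : g'.Derives ([Symbol.terminal t] ++ s) (w.map Symbol.terminal) := h
    obtain ⟨x₁, x₂, hx, h1, h2⟩ := derives_append_split h'
    have hx₁ : x₁ = [Symbol.terminal t] := by
      obtain ⟨n, hn⟩ := derives_iff_dervN.mp h1
      have := DervN.terminals_eq (w := [t]) (by simpa using hn)
      simpa using this
    subst hx₁
    have hx' : w.map Symbol.terminal = [t].map Symbol.terminal ++ x₂ := by simpa using hx
    obtain ⟨w₁, w₂, hw, hw1, hw2⟩ := terminal_map_append_split hx'
    have hw₁ : w₁ = [t] := map_terminal_inj (by rw [← hw1])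
    subst hw₁
    exact ⟨w₂, by simpa using hw, by rw [mem_Lng, ← hw2]; exact h2⟩
  · rintro ⟨w', rfl, hw'⟩
    have h3 := ContextFreeGrammar.Derives.append_left hw' [Symbol.terminal t]
    rw [mem_Lng]
    simpa using h3

/-- Unit-rule relation. -/
def URel (g' : ContextFreeGrammar.{uN} T') (B C : g'.NT) : Prop :=
  ∃ r ∈ g'.rules, r.input = B ∧ r.output = [Symbol.nonterminal C]

/-- A rule is a unit rule. -/
def IsUnit (r : ContextFreeRule T' g'.NT) : Prop := ∃ C, r.output = [Symbol.nonterminal C]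

lemma ureach_derives {B C : g'.NT} (h : Relation.ReflTransGen (URel g') B C) :
    g'.Derives [Symbol.nonterminal B] [Symbol.nonterminal C] := by
  induction h with
  | refl => rfl
  | tail _ hst ih =>
    obtain ⟨r, hr, hin, hout⟩ := hst
    refine ih.trans_produces ⟨r, hr, ?_⟩
    rw [← hin, ← hout]
    exact ContextFreeRule.Rewrites.input_output

lemma Lng_nt_iff {B : g'.NT} {w : List T'} :
    w ∈ Lng g' [Symbol.nonterminal B] ↔
      ∃ r ∈ g'.rules, Relation.ReflTransGen (URel g') B r.input ∧ ¬ IsUnit r ∧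
        w ∈ Lng g' r.output := by
  constructor
  · intro h
    obtain ⟨n, hn⟩ := derives_iff_dervN.mp h
    clear h
    induction n using Nat.strong_induction_on generalizing B with
    | _ n ih =>
      cases n with
      | zero =>
        exfalso
        have := hn.zero_eq
        cases w with
        | nil => exact absurd this (by simp)
        | cons t w' => simp at this
      | succ m =>
        obtain ⟨v, hp, hd⟩ := hn.succ_head
        obtain ⟨r₀, hr₀, hrw⟩ := hp
        obtain ⟨hin, hout⟩ := rewrites_singleton_nt hrw
        by_cases hu : IsUnit r₀
        · obtain ⟨C, hC⟩ := hu
          rw [hout, hC] at hd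
          obtain ⟨r, hr, hreach, hnu, hw⟩ := ih m (Nat.lt_succ_self m) hd
          exact ⟨r, hr, Relation.ReflTransGen.head ⟨r₀, hr₀, hin, hC⟩ hreach, hnu, hw⟩
        · refine ⟨r₀, hr₀, ?_, hu, ?_⟩
          · rw [hin]
          · rw [mem_Lng, ← hout]
            exact hd.derives
  · rintro ⟨r, hr, hreach, -, hw⟩
    have h1 : g'.Derives [Symbol.nonterminal B] [Symbol.nonterminal r.input] :=
      ureach_derives hreach
    have h2 : g'.Produces [Symbol.nonterminal r.input] r.output :=
      ⟨r, hr, ContextFreeRule.Rewrites.input_output⟩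
    exact (h1.trans_produces h2).trans hw

lemma nonunit_cons (hrl : RightLinear g') {r : ContextFreeRule T' g'.NT} (hr : r ∈ g'.rules)
    (hnu : ¬ IsUnit r) {a : T'} {w' : List T'} :
    a :: w' ∈ Lng g' r.output ↔
      ∃ rest, r.output = Symbol.terminal a :: rest ∧ w' ∈ Lng g' rest := by
  constructor
  · intro h
    rcases hrl r hr with ⟨β, hβ⟩ | ⟨B, β, hβ⟩
    · rw [hβ] at h
      rw [Lng_terminals] at h
      cases β with
      | nil => simp at h
      | cons t β' =>
        injection h with h1 h2
        subst h1
        subst h2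
        exact ⟨w'.map Symbol.terminal, by rw [hβ]; rfl, Lng_terminals.mpr rfl⟩
    · cases β with
      | nil => exact absurd ⟨B, by simpa using hβ⟩ hnu
      | cons t β' =>
        rw [hβ] at h
        have h2 : a :: w' ∈ Lng g' (Symbol.terminal t :: (β'.map Symbol.terminal ++
            [Symbol.nonterminal B])) := by
          simpa using h
        rw [Lng_terminal_cons] at h2
        obtain ⟨w'', hww, hw''⟩ := h2
        injection hww with h3 h4
        subst h3
        subst h4
        exact ⟨β'.map Symbol.terminal ++ [Symbol.nonterminal B], by rw [hβ]; simp, hw''⟩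
  · rintro ⟨rest, hout, hw⟩
    rw [hout, Lng_terminal_cons]
    exact ⟨w', rfl, hw⟩

/-- Suffix forms. -/
def Suf (g' : ContextFreeGrammar.{uN} T') : Set (List (Symbol T' g'.NT)) :=
  {s | s = [] ∨ (∃ r ∈ g'.rules, s <:+ r.output) ∨ ∃ B, s = [Symbol.nonterminal B]}

lemma suf_finite [Fintype g'.NT] : (Suf g').Finite := by
  have h1 : Suf g' ⊆ insert [] ((⋃ r ∈ (g'.rules : Set (ContextFreeRule T' g'.NT)),
      {s | s ∈ r.output.tails}) ∪ Set.range fun B : g'.NT => [Symbol.nonterminal B]) := by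
    rintro s (rfl | ⟨r, hr, hs⟩ | ⟨B, rfl⟩)
    · exact Set.mem_insert _ _
    · exact Set.mem_insert_of_mem _ (Or.inl (Set.mem_biUnion hr ((List.mem_tails _ _).mpr hs)))
    · exact Set.mem_insert_of_mem _ (Or.inr ⟨B, rfl⟩)
  refine Set.Finite.subset (Set.Finite.insert _ (Set.Finite.union ?_ (Set.finite_range _))) h1
  exact Set.Finite.biUnion g'.rules.finite_toSet fun r _ => r.output.tails.finite_toSet

lemma suf_tail_mem {sym : Symbol T' g'.NT} {s' : List (Symbol T' g'.NT)}
    (h : (sym :: s') ∈ Suf g') : s' ∈ Suf g' := by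
  rcases h with h | ⟨r, hr, hs⟩ | ⟨B, hB⟩
  · exact absurd h (by simp)
  · obtain ⟨pre, hp⟩ := hs
    exact Or.inr (Or.inl ⟨r, hr, ⟨pre ++ [sym], by rw [← hp]; simp⟩⟩)
  · injection hB with h1 h2
    exact Or.inl h2

lemma suffix_nt_nil (hrl : RightLinear g') {B : g'.NT} {s' : List (Symbol T' g'.NT)}
    (h : (Symbol.nonterminal B :: s') ∈ Suf g') : s' = [] := by
  rcases h with h | ⟨r, hr, hs⟩ | ⟨C, hC⟩
  · exact absurd h (by simp)
  · rcases hrl r hr with ⟨β, hβ⟩ | ⟨C, β, hβ⟩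
    · exfalso
      have hmem : Symbol.nonterminal B ∈ r.output := hs.subset (by simp)
      rw [hβ] at hmem
      obtain ⟨t, -, ht⟩ := List.mem_map.mp hmem
      cases ht
    · rw [hβ] at hs
      clear hβ
      induction β with
      | nil =>
        simp only [List.map_nil, List.nil_append] at hs
        rcases List.suffix_cons_iff.mp hs with h2 | h2
        · have h5 := congrArg List.tail h2
          simpa using h5
        · obtain ⟨pre, hp⟩ := h2
          exact absurd hp.symm (by simp)
      | cons t β' ih =>
        simp only [List.map_cons, List.cons_append] at hs
        rcases List.suffix_cons_iff.mp hs with h2 | h2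
        · exact absurd (congrArg List.head? h2) (by simp)
        · exact ih (by simpa using h2)
  · have h5 := congrArg List.tail hC
    simpa using h5

/-- One-letter step on suffix forms. -/
def stepG (g' : ContextFreeGrammar.{uN} T') [DecidableEq T'] (a : T') :
    List (Symbol T' g'.NT) → Set (List (Symbol T' g'.NT))
  | [] => ∅
  | Symbol.terminal t :: s' => if a = t then {s'} else ∅
  | Symbol.nonterminal B :: _ =>
      {rest | ∃ r ∈ g'.rules, Relation.ReflTransGen (URel g') B r.input ∧ ¬ IsUnit r ∧
        r.output = Symbol.terminal a :: rest}

lemma stepG_subset_suf [DecidableEq T'] {a : T'} {s : List (Symbol T' g'.NT)}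
    (hs : s ∈ Suf g') : stepG g' a s ⊆ Suf g' := by
  match s with
  | [] => exact fun x hx => absurd hx (Set.notMem_empty x)
  | Symbol.terminal t :: s' =>
    intro x hx
    by_cases hat : a = t
    · simp only [stepG, if_pos hat, Set.mem_singleton_iff] at hx
      subst hx
      exact suf_tail_mem hs
    · simp only [stepG, if_neg hat] at hx
      exact absurd hx (Set.notMem_empty x)
  | Symbol.nonterminal B :: s' =>
    rintro x ⟨r, hr, -, -, hout⟩
    exact Or.inr (Or.inl ⟨r, hr, ⟨[Symbol.terminal a], hout.symm⟩⟩)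

lemma stepG_spec (hrl : RightLinear g') [DecidableEq T'] {a : T'} {s : List (Symbol T' g'.NT)}
    (hs : s ∈ Suf g') {w' : List T'} :
    a :: w' ∈ Lng g' s ↔ ∃ s'' ∈ stepG g' a s, w' ∈ Lng g' s'' := by
  match s with
  | [] =>
    rw [Lng_nil]
    simp [stepG]
  | Symbol.terminal t :: s' =>
    rw [Lng_terminal_cons]
    constructor
    · rintro ⟨w'', hww, hw''⟩
      injection hww with h1 h2
      subst h1
      subst h2
      refine ⟨s', ?_, hw''⟩
      simp only [stepG, if_pos rfl]
      rfl
    · rintro ⟨s'', hs'', hw⟩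
      by_cases hat : a = t
      · subst hat
        simp only [stepG, if_pos rfl, Set.mem_singleton_iff] at hs''
        subst hs''
        exact ⟨w', rfl, hw⟩
      · simp only [stepG, if_neg hat] at hs''
        exact absurd hs'' (Set.notMem_empty _)
  | Symbol.nonterminal B :: s' =>
    have hnil : s' = [] := suffix_nt_nil hrl hs
    subst hnil
    rw [Lng_nt_iff]
    constructor
    · rintro ⟨r, hr, hreach, hnu, hw⟩
      rw [nonunit_cons hrl hr hnu] at hw
      obtain ⟨rest, hout, hw'⟩ := hw
      exact ⟨rest, ⟨r, hr, hreach, hnu, hout⟩, hw'⟩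
    · rintro ⟨rest, ⟨r, hr, hreach, hnu, hout⟩, hw⟩
      exact ⟨r, hr, hreach, hnu, (nonunit_cons hrl hr hnu).mpr ⟨rest, hout, hw⟩⟩

/-- The language of a right-linear grammar with finitely many nonterminals is regular. -/
theorem rightLinear_isRegular [Fintype g'.NT] (hrl : RightLinear g') :
    g'.language.IsRegular := by
  classical
  apply isRegular_of_finite_derivs
  set GoodSet : Set (Language T') :=
    (fun F : Set (List (Symbol T' g'.NT)) => bigU ((Lng g') '' F)) '' {F | F ⊆ Suf g'}
    with hGS
  have hGSfin : GoodSet.Finite := Set.Finite.image _ (suf_finite.finite_subsets)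
  have hmem : ∀ (F : Set (List (Symbol T' g'.NT))) (w : List T'),
      w ∈ bigU ((Lng g') '' F) ↔ ∃ s ∈ F, w ∈ Lng g' s := by
    intro F w
    rw [mem_bigU]
    constructor
    · rintro ⟨P, ⟨s, hsF, rfl⟩, hw⟩
      exact ⟨s, hsF, hw⟩
    · rintro ⟨s, hsF, hw⟩
      exact ⟨Lng g' s, ⟨s, hsF, rfl⟩, hw⟩
  have hstep : ∀ L ∈ GoodSet, ∀ a : T', derivWord [a] L ∈ GoodSet := by
    rintro _ ⟨F, hF, rfl⟩ a
    refine ⟨⋃ s ∈ F, stepG g' a s, Set.iUnion₂_subset fun s hs => stepG_subset_suf (hF hs), ?_⟩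
    ext w'
    rw [hmem]
    show (∃ s'' ∈ ⋃ s ∈ F, stepG g' a s, w' ∈ Lng g' s'') ↔ w' ∈ derivWord [a] _
    constructor
    · rintro ⟨s'', hs'', hw⟩
      obtain ⟨s, hsF, hsG⟩ := Set.mem_iUnion₂.mp hs''
      show a :: w' ∈ bigU _
      rw [hmem]
      exact ⟨s, hsF, (stepG_spec hrl (hF hsF)).mpr ⟨s'', hsG, hw⟩⟩
    · intro hw
      have : a :: w' ∈ bigU ((Lng g') '' F) := hw
      rw [hmem] at this
      obtain ⟨s, hsF, hs⟩ := this
      obtain ⟨s'', hsG, hw'⟩ := (stepG_spec hrl (hF hsF)).mp hs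
      exact ⟨s'', Set.mem_iUnion₂.mpr ⟨s, hsF, hsG⟩, hw'⟩
  have hlang : g'.language ∈ GoodSet := by
    refine ⟨{[Symbol.nonterminal g'.initial]}, by
      rintro s rfl
      exact Or.inr (Or.inr ⟨g'.initial, rfl⟩), ?_⟩
    ext w
    rw [hmem]
    constructor
    · rintro ⟨s, rfl, hw⟩
      exact hw
    · intro hw
      exact ⟨[Symbol.nonterminal g'.initial], rfl, hw⟩
  have hclosed : ∀ u : List T', ∀ L ∈ GoodSet, derivWord u L ∈ GoodSet := by
    intro u
    induction u with
    | nil => intro L hL; simpa using hL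
    | cons a u ih =>
      intro L hL
      rw [derivWord_cons]
      exact ih _ (hstep L hL a)
  refine Set.Finite.subset hGSfin ?_
  rintro _ ⟨u, rfl⟩
  exact hclosed u _ hlang

end RightLinear

section DefSubCorrespondence

variable {g : ContextFreeGrammar.{uN} T} {X : g.NT}

/-- Convert a symbol of `def(X)` back to a symbol of `G`. -/
def unconv (g : ContextFreeGrammar.{uN} T) (X : g.NT) :
    Symbol (T ⊕ g.NT) {Y : g.NT // SameComp g X Y} → Symbol T g.NT
  | .terminal (Sum.inl t) => .terminal t
  | .terminal (Sum.inr Y) => .nonterminal Y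
  | .nonterminal Y => .nonterminal Y.1

lemma unconv_conv (s : Symbol T g.NT) : unconv g X (convSym g X s) = s := by
  cases s with
  | terminal t => rfl
  | nonterminal Y =>
    by_cases h : SameComp g X Y
    · rw [convSym, dif_pos h]
      rfl
    · rw [convSym, dif_neg h]
      rfl

lemma unconv_conv_list (l : List (Symbol T g.NT)) :
    (l.map (convSym g X)).map (unconv g X) = l := by
  rw [List.map_map]
  have : ∀ s ∈ l, (unconv g X ∘ convSym g X) s = id s := fun s _ => unconv_conv s
  rw [List.map_congr_left this, List.map_id]

/-- The substitution target. -/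
def FF (g : ContextFreeGrammar.{uN} T) : T ⊕ g.NT → Language T :=
  Sum.elim (fun t => {[t]}) (fun Y => langFrom g Y)

lemma mem_defSub_rules {r' : ContextFreeRule (T ⊕ g.NT) (defSub g X).NT} :
    r' ∈ (defSub g X).rules ↔ ∃ r ∈ g.rules, ∃ h : SameComp g X r.input,
      r' = ⟨⟨r.input, h⟩, r.output.map (convSym g X)⟩ := by
  suffices key : ∀ r'' : ContextFreeRule (T ⊕ g.NT) {Y : g.NT // SameComp g X Y},
      r'' ∈ (g.rules.toList.filterMap fun r =>
        if h : SameComp g X r.input then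
          some (⟨⟨r.input, h⟩, r.output.map (convSym g X)⟩ :
            ContextFreeRule (T ⊕ g.NT) {Y : g.NT // SameComp g X Y})
        else none).toFinset ↔ ∃ r ∈ g.rules, ∃ h : SameComp g X r.input,
        r'' = ⟨⟨r.input, h⟩, r.output.map (convSym g X)⟩ from key r'
  intro r'
  rw [List.mem_toFinset, List.mem_filterMap]
  constructor
  · rintro ⟨r, hr, hr'⟩
    rw [Finset.mem_toList] at hr
    by_cases h : SameComp g X r.input
    · rw [dif_pos h] at hr'
      exact ⟨r, hr, h, (Option.some_inj.mp hr').symm⟩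
    · rw [dif_neg h] at hr'
      exact absurd hr' (by simp)
  · rintro ⟨r, hr, h, rfl⟩
    exact ⟨r, Finset.mem_toList.mpr hr, by rw [dif_pos h]⟩

lemma defSub_produces_unconv {s t : List (Symbol (T ⊕ g.NT) (defSub g X).NT)}
    (h : (defSub g X).Produces s t) :
    g.Produces (s.map (unconv g X)) (t.map (unconv g X)) := by
  obtain ⟨r', hr', hrw⟩ := h
  rw [mem_defSub_rules] at hr'
  obtain ⟨r, hr, hcomp, rfl⟩ := hr'
  obtain ⟨p, q, hin, hout⟩ := hrw.exists_parts
  refine ⟨r, hr, ?_⟩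
  rw [hin, hout]
  have key : ∀ (p q : List (Symbol (T ⊕ g.NT) {Y : g.NT // SameComp g X Y})),
      r.Rewrites ((p ++ [Symbol.nonterminal (⟨r.input, hcomp⟩ : {Y : g.NT // SameComp g X Y})] ++ q).map (unconv g X))
        ((p ++ r.output.map (convSym g X) ++ q).map (unconv g X)) := by
    intro p q
    rw [List.map_append, List.map_append, List.map_append, List.map_append, unconv_conv_list]
    exact ContextFreeRule.rewrites_of_exists_parts r _ _
  exact key p q

lemma defSub_derives_unconv {s t : List (Symbol (T ⊕ g.NT) (defSub g X).NT)}
    (h : (defSub g X).Derives s t) :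
    g.Derives (s.map (unconv g X)) (t.map (unconv g X)) := by
  induction h with
  | refl => rfl
  | tail _ hp ih => exact ih.trans_produces (defSub_produces_unconv hp)

lemma substStr_derives {ω : List (T ⊕ g.NT)} {w : List T} (hw : w ∈ substStr (FF g) ω) :
    g.Derives ((ω.map (Symbol.terminal (N := (defSub g X).NT))).map (unconv g X))
      (w.map Symbol.terminal) := by
  induction ω generalizing w with
  | nil =>
    have : w = [] := Language.mem_one w |>.mp hw
    subst this
    rfl
  | cons c ω' ih =>
    rw [show substStr (FF g) (c :: ω') = FF g c * substStr (FF g) ω' from rfl,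
      Language.mem_mul] at hw
    obtain ⟨p, hp, q, hq, hpq⟩ := hw
    subst hpq
    have hc : g.Derives [unconv g X (Symbol.terminal c)] (p.map Symbol.terminal) := by
      cases c with
      | inl t =>
        have : p = [t] := hp
        subst this
        rfl
      | inr Y =>
        exact hp
    have hrest := ih hq
    have h1 : ((c :: ω').map (Symbol.terminal (N := (defSub g X).NT))).map (unconv g X) =
        [unconv g X (Symbol.terminal c)] ++
          ((ω'.map (Symbol.terminal (N := (defSub g X).NT))).map (unconv g X)) := rfl
    rw [h1, List.map_append]
    exact (hc.append_right _).trans (hrest.append_left _)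

/-- Main hard direction: a `g`-derivation to terminals factors through `def(X)`. -/
lemma derivation_factor :
    ∀ n : ℕ, ∀ (s : List (Symbol (T ⊕ g.NT) (defSub g X).NT)) (w : List T) (m : ℕ), m ≤ n →
    DervN g m (s.map (unconv g X)) (w.map Symbol.terminal) →
    ∃ ω : List (T ⊕ g.NT), (defSub g X).Derives s (ω.map Symbol.terminal) ∧
      w ∈ substStr (FF g) ω := by
  intro n
  induction n using Nat.strong_induction_on with
  | _ n ihn =>
    intro s
    induction s with
    | nil =>
      intro w m _ hder
      have h1 : w.map (Symbol.terminal (N := g.NT)) = [] := by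
        have := hder.nil_eq
        · exact this
      have hw : w = [] := by
        cases w with
        | nil => rfl
        | cons t w' => exact absurd h1 (by simp)
      subst hw
      exact ⟨[], ContextFreeGrammar.Derives.refl _, Language.nil_mem_one⟩
    | cons a s' ihs =>
      intro w m hm hder
      have heq : (a :: s').map (unconv g X) = [unconv g X a] ++ s'.map (unconv g X) := rfl
      rw [heq] at hder
      obtain ⟨m₁, m₂, x₁, x₂, hmm, hx, h1, h2⟩ := hder.append_split _ _ rfl
      obtain ⟨w₁, w₂, hw, hx₁, hx₂⟩ := terminal_map_append_split hx
      subst hw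
      subst hx₁
      subst hx₂
      obtain ⟨ω₂, hd₂, hs₂⟩ := ihs w₂ m₂ (by omega) h2
      cases a with
      | terminal c =>
        cases c with
        | inl t =>
          have ht : w₁.map (Symbol.terminal (N := g.NT)) =
              [t].map (Symbol.terminal (N := g.NT)) := by
            have h3 := DervN.terminals_eq (w := [t]) (by exact h1)
            simpa using h3
          have hw₁ : w₁ = [t] := map_terminal_inj (g' := g) ht
          subst hw₁
          refine ⟨Sum.inl t :: ω₂, ?_, ?_⟩
          · have h4 := hd₂.append_left [Symbol.terminal (Sum.inl t)]
            simpa using h4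
          · exact Language.append_mem_mul rfl hs₂
        | inr Y =>
          have hp : w₁ ∈ langFrom g Y := h1.derives
          refine ⟨Sum.inr Y :: ω₂, ?_, ?_⟩
          · have h4 := hd₂.append_left [Symbol.terminal (Sum.inr Y)]
            simpa using h4
          · exact Language.append_mem_mul hp hs₂
      | nonterminal B =>
        cases m₁ with
        | zero =>
          exfalso
          have h3 := h1.zero_eq
          cases w₁ with
          | nil => exact absurd h3 (by simp [unconv])
          | cons t w' => simp [unconv] at h3
        | succ k =>
          obtain ⟨v, hp, hd⟩ := h1.succ_head
          obtain ⟨r, hr, hrw⟩ := hp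
          obtain ⟨hin, hout⟩ := rewrites_singleton_nt hrw
          subst hout
          have hk : k < n := by omega
          obtain ⟨ω₁, hd₁, hs₁⟩ := ihn k hk (r.output.map (convSym g X)) w₁ k le_rfl
            (by erw [unconv_conv_list]; exact hd)
          have hcomp : SameComp g X r.input := hin ▸ B.2
          have hB : B = ⟨r.input, hcomp⟩ := Subtype.ext hin.symm
          have hrule : (⟨⟨r.input, hcomp⟩, r.output.map (convSym g X)⟩ :
              ContextFreeRule (T ⊕ g.NT) (defSub g X).NT) ∈ (defSub g X).rules :=
            mem_defSub_rules.mpr ⟨r, hr, hcomp, rfl⟩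
          have hstep : (defSub g X).Produces [Symbol.nonterminal B]
              (r.output.map (convSym g X)) := by
            rw [hB]
            exact ⟨_, hrule, ContextFreeRule.Rewrites.input_output⟩
          refine ⟨ω₁ ++ ω₂, ?_, ?_⟩
          · have hstep' := hstep.append_right s'
            have hmid := hd₁.append_right s'
            have hlast := hd₂.append_left (ω₁.map Symbol.terminal)
            have hcombined := (hstep'.trans_derives hmid).trans hlast
            simpa using hcombined
          · rw [substStr_append]
            exact Language.append_mem_mul hs₁ hs₂

end DefSubCorrespondence

section Assembly

variable {g : ContextFreeGrammar.{uN} T}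

lemma langFrom_eq_substLang (X : g.NT) :
    langFrom g X = substLang (FF g) (defSub g X).language := by
  ext w
  rw [mem_substLang]
  constructor
  · intro hw
    obtain ⟨n, hn⟩ := derives_iff_dervN.mp hw
    obtain ⟨ω, hd, hsub⟩ := derivation_factor n [Symbol.nonterminal (defSub g X).initial] w n
      le_rfl (by exact hn)
    exact ⟨ω, hd, hsub⟩
  · rintro ⟨ω, hω, hsub⟩
    have h1 := defSub_derives_unconv (X := X) hω
    have h2 := substStr_derives (X := X) hsub
    exact h1.trans h2

/-- The set of letters occurring in rule right-hand sides of `def(X)`. -/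
def SuppS (g : ContextFreeGrammar.{uN} T) (X : g.NT) : Set (T ⊕ g.NT) :=
  {c | ∃ r ∈ g.rules, SameComp g X r.input ∧ ∃ s ∈ r.output, convSym g X s = Symbol.terminal c}

lemma suppS_finite (X : g.NT) : (SuppS g X).Finite := by
  have hsub : SuppS g X ⊆ ⋃ r ∈ (g.rules : Set (ContextFreeRule T g.NT)),
      ⋃ s ∈ {s | s ∈ r.output}, {c | convSym g X s = Symbol.terminal c} := by
    rintro c ⟨r, hr, -, s, hs, hc⟩
    exact Set.mem_biUnion hr (Set.mem_biUnion hs hc)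
  refine Set.Finite.subset ?_ hsub
  refine Set.Finite.biUnion g.rules.finite_toSet fun r _ => ?_
  refine Set.Finite.biUnion r.output.finite_toSet fun s _ => ?_
  apply Set.Subsingleton.finite
  intro c hc c' hc'
  have : Symbol.terminal (N := (defSub g X).NT) c = Symbol.terminal c' := by
    exact Eq.trans (Eq.symm hc) hc'
  exact Symbol.terminal.inj this

lemma defSub_sentential_letters {X : g.NT} {s : List (Symbol (T ⊕ g.NT) (defSub g X).NT)}
    (h : (defSub g X).Derives [Symbol.nonterminal (defSub g X).initial] s) :
    ∀ c, Symbol.terminal c ∈ s → c ∈ SuppS g X := by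
  induction h with
  | refl =>
    intro c hc
    simp at hc
  | tail _ hp ih =>
    obtain ⟨r', hr', hrw⟩ := hp
    rw [mem_defSub_rules] at hr'
    obtain ⟨r, hr, hcomp, rfl⟩ := hr'
    obtain ⟨p, q, hin, hout⟩ := hrw.exists_parts
    intro c hc
    rw [hout] at hc
    rcases List.mem_append.mp hc with hc1 | hc2
    · rcases List.mem_append.mp hc1 with hcp | hcmid
      · exact ih c (by
          rw [hin]
          exact List.mem_append.mpr (Or.inl (List.mem_append.mpr (Or.inl hcp))))
      · obtain ⟨s₀, hs₀, hconv⟩ := List.mem_map.mp hcmid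
        exact ⟨r, hr, hcomp, s₀, hs₀, hconv⟩
    · exact ih c (by
        rw [hin]
        exact List.mem_append.mpr (Or.inr hc2))

lemma defSub_language_letters {X : g.NT} {ω : List (T ⊕ g.NT)}
    (hω : ω ∈ (defSub g X).language) : ∀ c ∈ ω, c ∈ SuppS g X := by
  intro c hc
  exact defSub_sentential_letters hω c (List.mem_map.mpr ⟨c, hc, rfl⟩)

lemma suppS_cases {X : g.NT} {c : T ⊕ g.NT} (hc : c ∈ SuppS g X) :
    (∃ t, c = Sum.inl t) ∨ ∃ Y, c = Sum.inr Y ∧ ¬ SameComp g X Y ∧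
      Relation.ReflTransGen (ConnStep g) X Y := by
  obtain ⟨r, hr, hcomp, s₀, hs₀, hconv⟩ := hc
  cases s₀ with
  | terminal t =>
    left
    have : Symbol.terminal (N := (defSub g X).NT) (Sum.inl t) = Symbol.terminal c := hconv
    exact ⟨t, (Symbol.terminal.inj this).symm⟩
  | nonterminal Y =>
    by_cases h : SameComp g X Y
    · rw [convSym, dif_pos h] at hconv
      exact absurd hconv (by simp)
    · right
      rw [convSym, dif_neg h] at hconv
      refine ⟨Y, (Symbol.terminal.inj hconv).symm, h, ?_⟩
      exact Relation.ReflTransGen.tail hcomp.1 ⟨r, hr, rfl, hs₀⟩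

lemma reach_finite (X : g.NT) : {Y | Relation.ReflTransGen (ConnStep g) X Y}.Finite := by
  have hsub : {Y | Relation.ReflTransGen (ConnStep g) X Y} ⊆
      insert X (⋃ r ∈ (g.rules : Set (ContextFreeRule T g.NT)),
        {Y | Symbol.nonterminal Y ∈ r.output}) := by
    intro Y hY
    rcases Relation.ReflTransGen.cases_tail hY with h | ⟨Z, -, hstep⟩
    · rw [h]
      exact Set.mem_insert _ _
    · obtain ⟨r, hr, -, hmem⟩ := hstep
      exact Set.mem_insert_of_mem _ (Set.mem_biUnion hr hmem)
  refine Set.Finite.subset (Set.Finite.insert _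
    (Set.Finite.biUnion g.rules.finite_toSet fun r _ => ?_)) hsub
  have heq : {Y | Symbol.nonterminal Y ∈ r.output} =
      (Symbol.nonterminal : g.NT → Symbol T g.NT) ⁻¹' {s | s ∈ r.output} := rfl
  rw [heq]
  exact Set.Finite.preimage
    (Set.injOn_of_injective fun a b hab => Symbol.nonterminal.inj hab) r.output.finite_toSet

lemma sameComp_finite (X : g.NT) : {Y | SameComp g X Y}.Finite :=
  (reach_finite X).subset fun _ hY => hY.1

lemma derivs_singleton_finite {α : Type*} (x : List α) :
    (Derivs ({x} : Language α)).Finite := by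
  have hsub : Derivs ({x} : Language α) ⊆
      insert 0 ((fun w₀ : List α => ({w₀} : Language α)) '' {w₀ | w₀ <:+ x}) := by
    rintro _ ⟨u, rfl⟩
    by_cases h : ∃ w₀, x = u ++ w₀
    · obtain ⟨w₀, rfl⟩ := h
      have heq2 : derivWord u ({u ++ w₀} : Language α) = ({w₀} : Language α) := by
        ext w
        constructor
        · intro hw
          show w = w₀
          have h3 : u ++ w = u ++ w₀ := hw
          exact List.append_cancel_left h3
        · intro hw
          have h4 : w = w₀ := hw
          subst h4
          show u ++ w ∈ ({u ++ w} : Language α)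
          rfl
      exact Set.mem_insert_of_mem _ ⟨w₀, ⟨u, rfl⟩, heq2.symm⟩
    · have hzero : derivWord u ({x} : Language α) = 0 := by
        ext w
        constructor
        · intro hw
          exact absurd ⟨w, (hw : u ++ w = x).symm⟩ h
        · intro hw
          exact absurd hw (Language.notMem_zero w)
      show derivWord u ({x} : Language α) ∈ _
      rw [hzero]
      exact Set.mem_insert _ _
  refine Set.Finite.subset (Set.Finite.insert _ (Set.Finite.image _ ?_)) hsub
  exact Set.Finite.subset x.tails.finite_toSet fun w hw => (List.mem_tails _ _).mpr hw

lemma reverse_rightLinear {T' : Type*} {g' : ContextFreeGrammar.{uN} T'} (h : LeftLinear g') :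
    RightLinear g'.reverse := by
  intro r'' hr''
  have : ∃ r ∈ g'.rules, ContextFreeRule.reverse r = r'' := by
    simpa [ContextFreeGrammar.reverse] using hr''
  obtain ⟨r, hr, rfl⟩ := this
  rcases h r hr with ⟨β, hβ⟩ | ⟨B, β, hβ⟩
  · left
    refine ⟨β.reverse, ?_⟩
    show r.output.reverse = _
    rw [hβ, ← List.map_reverse]
  · right
    refine ⟨B, β.reverse, ?_⟩
    show r.output.reverse = _
    rw [hβ]
    simp [List.map_reverse]

noncomputable def reachCard (g : ContextFreeGrammar.{uN} T) (X : g.NT) : ℕ :=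
  (reach_finite (g := g) X).toFinset.card

lemma reachCard_lt {X Y : g.NT} (h1 : Relation.ReflTransGen (ConnStep g) X Y)
    (h2 : ¬ Relation.ReflTransGen (ConnStep g) Y X) : reachCard g Y < reachCard g X := by
  apply Finset.card_lt_card
  rw [Finset.ssubset_iff_of_subset]
  · refine ⟨X, ?_, ?_⟩
    · exact (Set.Finite.mem_toFinset _).mpr Relation.ReflTransGen.refl
    · intro hmem
      exact h2 ((Set.Finite.mem_toFinset _).mp hmem)
  · intro Z hZ
    have hz := (Set.Finite.mem_toFinset _).mp hZ
    exact (Set.Finite.mem_toFinset _).mpr (h1.trans hz)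

theorem langFrom_isRegular
    (hyp : ∀ X : g.NT, LeftLinear (defSub g X) ∨ RightLinear (defSub g X)) :
    ∀ X : g.NT, (langFrom g X).IsRegular := by
  suffices H : ∀ (n : ℕ) (X : g.NT), reachCard g X ≤ n → (langFrom g X).IsRegular by
    intro X
    exact H _ X le_rfl
  intro n
  induction n with
  | zero =>
    intro X hX
    exfalso
    have hmem : X ∈ (reach_finite (g := g) X).toFinset :=
      (Set.Finite.mem_toFinset _).mpr Relation.ReflTransGen.refl
    have hpos := Finset.card_pos.mpr ⟨X, hmem⟩
    have : 0 < reachCard g X := hpos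
    omega
  | succ n ih =>
    intro X hX
    haveI hft : Fintype (defSub g X).NT := (sameComp_finite (g := g) X).fintype
    have hdef : (defSub g X).language.IsRegular := by
      rcases hyp X with hL | hR
      · haveI : Fintype (defSub g X).reverse.NT := hft
        have hrev := rightLinear_isRegular (g' := (defSub g X).reverse)
          (reverse_rightLinear hL)
        have heq : (defSub g X).language = ((defSub g X).reverse.language).reverse := by
          rw [ContextFreeGrammar.language_reverse, Language.reverse_reverse]
        rw [heq]
        exact isRegular_reverse hrev
      · exact rightLinear_isRegular hR
    have hLder := finite_derivs_of_isRegular hdef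
    have hF : ∀ c ∈ SuppS g X, (Derivs (FF g c)).Finite := by
      intro c hc
      rcases suppS_cases hc with ⟨t, rfl⟩ | ⟨Y, rfl, hnc, hreach⟩
      · exact derivs_singleton_finite [t]
      · have hnYX : ¬ Relation.ReflTransGen (ConnStep g) Y X := fun hYX => hnc ⟨hreach, hYX⟩
        have hlt : reachCard g Y < reachCard g X := reachCard_lt hreach hnYX
        have hreg := ih Y (by omega)
        exact finite_derivs_of_isRegular hreg
    have hfin := finite_derivs_substLang (f := FF g) (L := (defSub g X).language)
      (suppS_finite X) (fun u hu c hc => defSub_language_letters hu c hc) hF hLder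
    rw [langFrom_eq_substLang X]
    exact isRegular_of_finite_derivs hfin

end Assembly

end LRApprox

open LRApprox

/-- If every defining subgrammar `def(X)` in the
strongly-connected-component decomposition of a CFG `G` is left-linear or
right-linear, then `L(G)` is regular. -/
theorem decomposition_linear_regular {T : Type*} (g : LRApprox.ContextFreeGrammar T)
    (h : ∀ X : g.NT, LeftLinear (defSub g X) ∨ RightLinear (defSub g X)) :
    g.language.IsRegular := by
  have h1 := langFrom_isRegular (g := g) h g.initial
  have heq : g.language = langFrom g g.initial := rfl
  rw [heq]
  exact h1
end
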